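/- Under the standing hypotheses, let η̃ ∈ (0,u) and assume 0 < η < e^{σ}/2, 1 + ηe^{−σ} < e^{−σ/2}, m(η,σ) < η̃, and σ + u > 0, where m(η,σ) = max{log(1 + ηe^{−σ}), log(1/(1 − ηe^{−σ})), arcsin(η/(e^{σ}−η))}. Let δ ∈ (0,1) satisfy (1/(u + log 2))·log(1/δ) − 1 > m(η,σ)/(η̃ − m(η,σ)). Let x ∈ ℝ³ with |P_L x| = 1 and 0 < x₃ < δ, let t > 0 satisfy 0 < G₃(s,x) < 1 for s ∈ [0,t) and G₃(t,x) = 1, and let n be the largest integer in [0,t). Then: (a) e^{(σ−η̃)t} ≤ |P_L G(t,x)| ≤ e^{(σ+η̃)t}; (b) e^{(u−η̃)t}·x₃ ≤ 1 ≤ e^{(u+η̃)t}·x₃; (c) (1/(u+η̃))·log(1/x₃) ≤ t ≤ (1/(u−η̃))·log(1/x₃); (d) for every ψ ∈ ℝ and every real φ with ψ − tμ − (n+1)·arcsin(η/(e^{σ}−η)) ≤ φ ≤ ψ − tμ + (n+1)·arcsin(η/(e^{σ}−η)) one has ψ − t(μ+η̃) ≤ φ ≤ ψ − t(μ−η̃).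 -/

import Mathlib

noncomputable section
open Real Set

abbrev R3 := EuclideanSpace ℝ (Fin 3)

/-- Orthogonal projection onto `L = ℝe₁ ⊕ ℝe₂`. -/
def PL (x : R3) : R3 := WithLp.toLp 2 fun i => if (i : ℕ) = 2 then 0 else x i

/-- Orthogonal projection onto `U = ℝe₃`. -/
def PU (x : R3) : R3 := WithLp.toLp 2 fun i => if (i : ℕ) = 2 then x i else 0

/-- The plane `L = ℝe₁ ⊕ ℝe₂`. -/
def Lset : Set R3 := {x | x 2 = 0}

/-- The line `U = ℝe₃`. -/
def Uset : Set R3 := {x | x 0 = 0 ∧ x 1 = 0}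

/-- `B₁ = {x : |P_L x| ≤ 1, |P_U x| ≤ 1}`. -/
def B1 : Set R3 := {x | ‖PL x‖ ≤ 1 ∧ ‖PU x‖ ≤ 1}

/-- The linearized flow `T(t)`. -/
def Tmap (σ μ u t : ℝ) (x : R3) : R3 := WithLp.toLp 2 fun i =>
  if (i : ℕ) = 0 then exp (σ * t) * (cos (μ * t) * x 0 + sin (μ * t) * x 1)
  else if (i : ℕ) = 1 then exp (σ * t) * (-(sin (μ * t)) * x 0 + cos (μ * t) * x 1)
  else exp (u * t) * x 2

/-- A C¹ flow on ℝ³. -/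
def IsC1Flow (G : ℝ → R3 → R3) : Prop :=
  ContDiff ℝ 1 (fun p : ℝ × R3 => G p.1 p.2) ∧ (∀ x, G 0 x = x) ∧
    ∀ s t x, G (t + s) x = G t (G s x)

/-- `M` is invariant under the flow `G` in the set `N`. -/
def InvariantIn (G : ℝ → R3 → R3) (M N : Set R3) : Prop :=
  ∀ x ∈ M ∩ N, ∀ I : Set ℝ, (0 : ℝ) ∈ I → I.OrdConnected →
    (∀ t ∈ I, G t x ∈ N) → ∀ t ∈ I, G t x ∈ M

lemma norm3 (v : R3) : ‖v‖ = Real.sqrt ((v 0)^2 + (v 1)^2 + (v 2)^2) := by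
  rw [EuclideanSpace.norm_eq, Fin.sum_univ_three]
  simp [Real.norm_eq_abs, sq_abs]

lemma PL_apply (v : R3) : PL v 0 = v 0 ∧ PL v 1 = v 1 ∧ PL v 2 = 0 := by
  refine ⟨rfl, rfl, rfl⟩

lemma norm_PL (v : R3) : ‖PL v‖ = Real.sqrt ((v 0)^2 + (v 1)^2) := by
  rw [norm3]; simp [PL]

lemma norm_PU (v : R3) : ‖PU v‖ = |v 2| := by
  rw [norm3]
  simp [PU, Real.sqrt_sq_eq_abs]

lemma norm_PL_le (v : R3) : ‖PL v‖ ≤ ‖v‖ := by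
  rw [norm_PL, norm3]
  exact Real.sqrt_le_sqrt (by nlinarith [sq_nonneg (v 2)])

lemma abs_c2_le (v : R3) : |v 2| ≤ ‖v‖ := by
  rw [norm3, ← Real.sqrt_sq_eq_abs]
  exact Real.sqrt_le_sqrt (by nlinarith [sq_nonneg (v 0), sq_nonneg (v 1)])

lemma sub_PU (y : R3) : y - PU y = PL y := by
  ext i
  simp only [PiLp.toLp_apply, PiLp.sub_apply, PL, PU]
  split_ifs <;> ring

lemma sub_PL (y : R3) : y - PL y = PU y := by
  ext i
  simp only [PiLp.toLp_apply, PiLp.sub_apply, PL, PU]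
  split_ifs <;> ring

lemma PL_smul_add (a b : ℝ) (x y : R3) : PL (a • x + b • y) = a • PL x + b • PL y := by
  ext i
  simp only [PiLp.toLp_apply, PiLp.add_apply, PiLp.smul_apply, PL, smul_eq_mul]
  split_ifs <;> ring

lemma PU_smul_add (a b : ℝ) (x y : R3) : PU (a • x + b • y) = a • PU x + b • PU y := by
  ext i
  simp only [PiLp.toLp_apply, PiLp.add_apply, PiLp.smul_apply, PU, smul_eq_mul]
  split_ifs <;> ring

lemma B1_convex : Convex ℝ B1 := by
  intro x hx y hy a b ha hb hab
  constructor
  · rw [PL_smul_add]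
    calc ‖a • PL x + b • PL y‖ ≤ ‖a • PL x‖ + ‖b • PL y‖ := norm_add_le _ _
    _ = a * ‖PL x‖ + b * ‖PL y‖ := by
        rw [norm_smul, norm_smul, Real.norm_eq_abs, Real.norm_eq_abs, abs_of_nonneg ha,
          abs_of_nonneg hb]
    _ ≤ a * 1 + b * 1 := by
        gcongr
        exacts [hx.1, hy.1]
    _ = 1 := by linarith
  · rw [PU_smul_add]
    calc ‖a • PU x + b • PU y‖ ≤ ‖a • PU x‖ + ‖b • PU y‖ := norm_add_le _ _
    _ = a * ‖PU x‖ + b * ‖PU y‖ := by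
        rw [norm_smul, norm_smul, Real.norm_eq_abs, Real.norm_eq_abs, abs_of_nonneg ha,
          abs_of_nonneg hb]
    _ ≤ a * 1 + b * 1 := by
        gcongr
        exacts [hx.2, hy.2]
    _ = 1 := by linarith

/-- `Tmap` as a continuous linear map. -/
def Tlin (σ μ u t : ℝ) : R3 →L[ℝ] R3 :=
  LinearMap.toContinuousLinearMap
  { toFun := Tmap σ μ u t
    map_add' := by
      intro x y
      ext i
      simp only [PiLp.toLp_apply, Tmap, PiLp.add_apply]
      split_ifs <;> ring
    map_smul' := by
      intro c x
      ext i
      simp only [PiLp.toLp_apply, Tmap, PiLp.smul_apply, RingHom.id_apply, smul_eq_mul]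
      split_ifs <;> ring }

lemma Tlin_apply (σ μ u t : ℝ) (x : R3) : Tlin σ μ u t x = Tmap σ μ u t x := rfl

lemma Tmap_c2 (σ μ u t : ℝ) (x : R3) : Tmap σ μ u t x 2 = exp (u * t) * x 2 := rfl

lemma norm_PL_Tmap (σ μ u t : ℝ) (x : R3) :
    ‖PL (Tmap σ μ u t x)‖ = exp (σ * t) * ‖PL x‖ := by
  rw [norm_PL, norm_PL]
  have h0 : Tmap σ μ u t x 0 = exp (σ * t) * (cos (μ * t) * x 0 + sin (μ * t) * x 1) := rfl
  have h1 : Tmap σ μ u t x 1 = exp (σ * t) * (-(sin (μ * t)) * x 0 + cos (μ * t) * x 1) := rfl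
  rw [h0, h1]
  have key : (exp (σ * t) * (cos (μ * t) * x 0 + sin (μ * t) * x 1))^2 +
      (exp (σ * t) * (-(sin (μ * t)) * x 0 + cos (μ * t) * x 1))^2 =
      (exp (σ * t))^2 * ((x 0)^2 + (x 1)^2) := by
    have := sin_sq_add_cos_sq (μ * t)
    nlinarith [this]
  rw [key, Real.sqrt_mul (sq_nonneg _), Real.sqrt_sq (exp_nonneg _)]

lemma PL_PL (v : R3) : PL (PL v) = PL v := by
  ext i
  simp only [PiLp.toLp_apply, PL]
  split_ifs <;> rfl

lemma PL_sub (a b : R3) : PL (a - b) = PL a - PL b := by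
  ext i
  simp only [PiLp.toLp_apply, PiLp.sub_apply, PL]
  split_ifs <;> ring

lemma PU_PL (v : R3) : PU (PL v) = 0 := by
  ext i
  simp only [PiLp.toLp_apply, PU, PL]
  split_ifs with h h2 <;> simp_all

lemma PL_PU (v : R3) : PL (PU v) = 0 := by
  ext i
  simp only [PiLp.toLp_apply, PU, PL]
  split_ifs with h h2 <;> simp_all

lemma PU_PU (v : R3) : PU (PU v) = PU v := by
  ext i
  simp only [PiLp.toLp_apply, PU]
  split_ifs <;> rfl


lemma PL_of_Uset {v : R3} (hv : v ∈ Uset) : PL v = 0 := by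
  ext i
  simp only [PiLp.toLp_apply, PL]
  split_ifs with h
  · simp
  · have h0 := hv.1
    have h1 := hv.2
    fin_cases i <;> simp_all [Uset]

lemma step_lemma (u σ μ η rB : ℝ) (hη : 0 < η)
    (hB1B : B1 ⊆ Metric.closedBall (0 : R3) rB)
    (G : ℝ → R3 → R3) (hG : IsC1Flow G)
    (hD2 : ∀ t ∈ Icc (0:ℝ) 1, ∀ x ∈ B1, ∀ y : R3,
      ‖fderiv ℝ (G t) x y - Tmap σ μ u t y‖ ≤ η * ‖y‖)
    (hGB : ∀ t ∈ Icc (0:ℝ) 1, ∀ x ∈ B1, G t x ∈ Metric.closedBall (0 : R3) rB)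
    (hLinv : InvariantIn G Lset (Metric.closedBall 0 rB))
    (hUinv : InvariantIn G Uset (Metric.closedBall 0 rB))
    (s : ℝ) (hs : s ∈ Icc (0:ℝ) 1) (y : R3) (hy : y ∈ B1) :
    |G s y 2 - exp (u * s) * y 2| ≤ η * |y 2| ∧
    |‖PL (G s y)‖ - exp (σ * s) * ‖PL y‖| ≤ η * ‖PL y‖ := by
  have hdiff : Differentiable ℝ (G s) := by
    have h : ContDiff ℝ 1 (fun x : R3 => (fun p : ℝ × R3 => G p.1 p.2) (s, x)) :=
      hG.1.comp (contDiff_const.prodMk contDiff_id)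
    exact h.differentiable one_ne_zero
  have hbound : ∀ z ∈ B1, ‖fderiv ℝ (G s) z - Tlin σ μ u s‖ ≤ η := by
    intro z hz
    refine ContinuousLinearMap.opNorm_le_bound _ hη.le fun w => ?_
    rw [ContinuousLinearMap.sub_apply, Tlin_apply]
    exact hD2 s hs z hz w
  have hPLy : PL y ∈ B1 := by
    refine ⟨by rw [PL_PL]; exact hy.1, by rw [PU_PL]; simp⟩
  have hPUy : PU y ∈ B1 := by
    refine ⟨by rw [PL_PU]; simp, by rw [PU_PU]; exact hy.2⟩
  -- invariance facts
  have hIcc : ∀ r ∈ Icc (0:ℝ) s, r ∈ Icc (0:ℝ) 1 :=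
    fun r hr => ⟨hr.1, hr.2.trans hs.2⟩
  have hL : G s (PL y) 2 = 0 := by
    have := hLinv (PL y) ⟨rfl, hB1B hPLy⟩ (Icc 0 s) ⟨le_refl 0, hs.1⟩ ordConnected_Icc
      (fun r hr => hGB r (hIcc r hr) _ hPLy) s ⟨hs.1, le_refl s⟩
    exact this
  have hU : G s (PU y) ∈ Uset := by
    exact hUinv (PU y) ⟨⟨rfl, rfl⟩, hB1B hPUy⟩ (Icc 0 s) ⟨le_refl 0, hs.1⟩ ordConnected_Icc
      (fun r hr => hGB r (hIcc r hr) _ hPUy) s ⟨hs.1, le_refl s⟩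
  constructor
  · -- third component estimate
    have mvt := B1_convex.norm_image_sub_le_of_norm_fderiv_le'
      (fun z _ => hdiff z) hbound hPLy hy
    rw [sub_PL, Tlin_apply] at mvt
    set w : R3 := G s y - G s (PL y) - Tmap σ μ u s (PU y) with hw
    have h2 : w 2 = G s y 2 - exp (u * s) * y 2 := by
      simp only [hw, PiLp.sub_apply, Tmap_c2, hL]
      have : PU y 2 = y 2 := rfl
      rw [this]; ring
    have := (abs_c2_le w).trans mvt
    rw [h2, norm_PU] at this
    exact this
  · -- PL estimate
    have mvt := B1_convex.norm_image_sub_le_of_norm_fderiv_le'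
      (fun z _ => hdiff z) hbound hPUy hy
    rw [sub_PU, Tlin_apply] at mvt
    set w : R3 := G s y - G s (PU y) - Tmap σ μ u s (PL y) with hw
    have hPLw : PL w = PL (G s y) - PL (Tmap σ μ u s (PL y)) := by
      rw [hw, PL_sub, PL_sub, PL_of_Uset hU]
      abel
    have h1 : |‖PL (G s y)‖ - ‖PL (Tmap σ μ u s (PL y))‖| ≤ ‖PL w‖ := by
      rw [hPLw]
      exact abs_norm_sub_norm_le _ _
    rw [norm_PL_Tmap, PL_PL] at h1
    exact h1.trans ((norm_PL_le w).trans mvt)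

theorem statement13
    (u σ μ η rB : ℝ) (hu : 0 < u) (hσ : σ < 0) (hμ : 0 < μ) (hη : 0 < η)
    (hB1B : B1 ⊆ Metric.closedBall (0 : R3) rB)
    (G : ℝ → R3 → R3) (hG : IsC1Flow G) (hG0 : ∀ t : ℝ, G t 0 = 0)
    (hD2 : ∀ t ∈ Icc (0:ℝ) 1, ∀ x ∈ B1, ∀ y : R3,
      ‖fderiv ℝ (G t) x y - Tmap σ μ u t y‖ ≤ η * ‖y‖)
    (hGB : ∀ t ∈ Icc (0:ℝ) 1, ∀ x ∈ B1, G t x ∈ Metric.closedBall (0 : R3) rB)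
    (hLinv : InvariantIn G Lset (Metric.closedBall 0 rB))
    (hUinv : InvariantIn G Uset (Metric.closedBall 0 rB))
    (ηt : ℝ) (hηt : 0 < ηt) (hηtu : ηt < u)
    (hησ2 : η < exp σ / 2) (hησ3 : 1 + η * exp (-σ) < exp (-σ / 2))
    (hm : max (max (Real.log (1 + η * exp (-σ))) (Real.log (1 / (1 - η * exp (-σ)))))
        (arcsin (η / (exp σ - η))) < ηt)
    (hσu : 0 < σ + u)
    (δ : ℝ) (hδ : δ ∈ Ioo (0 : ℝ) 1)
    (hδsmall : 1 / (u + Real.log 2) * Real.log (1 / δ) - 1 >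
      max (max (Real.log (1 + η * exp (-σ))) (Real.log (1 / (1 - η * exp (-σ)))))
          (arcsin (η / (exp σ - η))) /
        (ηt - max (max (Real.log (1 + η * exp (-σ)))
          (Real.log (1 / (1 - η * exp (-σ))))) (arcsin (η / (exp σ - η)))))
    (x : R3) (hxcyl : ‖PL x‖ = 1) (hx3pos : 0 < x 2) (hx3lt : x 2 < δ)
    (t : ℝ) (ht : 0 < t)
    (htravel : ∀ s ∈ Ico (0 : ℝ) t, 0 < G s x 2 ∧ G s x 2 < 1)
    (hhit : G t x 2 = 1)
    (n : ℕ) (hn1 : (n : ℝ) < t) (hn2 : t ≤ (n : ℝ) + 1) :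
    (exp ((σ - ηt) * t) ≤ ‖PL (G t x)‖ ∧ ‖PL (G t x)‖ ≤ exp ((σ + ηt) * t)) ∧
    (exp ((u - ηt) * t) * x 2 ≤ 1 ∧ 1 ≤ exp ((u + ηt) * t) * x 2) ∧
    (1 / (u + ηt) * Real.log (1 / x 2) ≤ t ∧ t ≤ 1 / (u - ηt) * Real.log (1 / x 2)) ∧
    (∀ ψ φ : ℝ,
      ψ - t * μ - ((n : ℝ) + 1) * arcsin (η / (exp σ - η)) ≤ φ →
      φ ≤ ψ - t * μ + ((n : ℝ) + 1) * arcsin (η / (exp σ - η)) →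
      ψ - t * (μ + ηt) ≤ φ ∧ φ ≤ ψ - t * (μ - ηt)) := by
  set m := max (max (Real.log (1 + η * exp (-σ))) (Real.log (1 / (1 - η * exp (-σ)))))
      (arcsin (η / (exp σ - η))) with hmdef
  have hEE : exp σ * exp (-σ) = 1 := by rw [← Real.exp_add]; simp
  have hEinvpos : (0:ℝ) < exp (-σ) := exp_pos _
  have hEσpos : (0:ℝ) < exp σ := exp_pos _
  have hEinv1 : (1:ℝ) ≤ exp (-σ) := by
    rw [← Real.exp_zero]; exact exp_le_exp.mpr (by linarith only [hσ])
  have hz : η * exp (-σ) < 1/2 := by nlinarith only [hη, hησ2, hEσpos, hEinvpos, hEE]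
  have hzpos : 0 < η * exp (-σ) := by positivity
  have hl1 : Real.log (1 + η * exp (-σ)) ≤ m := le_trans (le_max_left _ _) (le_max_left _ _)
  have hl2 : Real.log (1 / (1 - η * exp (-σ))) ≤ m := le_trans (le_max_right _ _) (le_max_left _ _)
  have hl3 : arcsin (η / (exp σ - η)) ≤ m := le_max_right _ _
  have hm0 : 0 ≤ m := le_trans (Real.log_nonneg (by linarith only [hzpos])) hl1
  have hmηt : m < ηt := hm
  have e1 : 1 + η * exp (-σ) ≤ exp m :=
    calc 1 + η * exp (-σ) = exp (Real.log (1 + η * exp (-σ))) :=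
          (Real.exp_log (by linarith only [hzpos])).symm
    _ ≤ exp m := exp_le_exp.mpr hl1
  have h1z : 0 < 1 - η * exp (-σ) := by linarith only [hz]
  have e2 : exp (-m) ≤ 1 - η * exp (-σ) := by
    have h : 1 / (1 - η * exp (-σ)) ≤ exp m :=
      calc 1 / (1 - η * exp (-σ)) = exp (Real.log (1 / (1 - η * exp (-σ)))) :=
            (Real.exp_log (by positivity)).symm
      _ ≤ exp m := exp_le_exp.mpr hl2
    have h' : (1 - η * exp (-σ)) * (1 / (1 - η * exp (-σ))) ≤ (1 - η * exp (-σ)) * exp m :=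
      mul_le_mul_of_nonneg_left h h1z.le
    rw [mul_one_div_cancel h1z.ne'] at h'
    have hmm : exp (-m) * exp m = 1 := by rw [← Real.exp_add]; simp
    nlinarith only [h', hmm, exp_pos m, exp_pos (-m), h1z]
  have hEu1 : (1:ℝ) < exp u := by
    rw [← Real.exp_zero]; exact exp_lt_exp.mpr hu
  have hEσ1 : exp σ < 1 := by
    rw [← Real.exp_zero]; exact exp_lt_exp.mpr hσ
  have hσηpos : 0 < exp σ - η := by linarith only [hη, hησ2, hEσpos]
  have hEuσ : (1:ℝ) ≤ exp u * exp (-σ) := by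
    rw [← Real.exp_add, ← Real.exp_zero]; exact exp_le_exp.mpr (by linarith only [hu, hσ])
  have hmulσp : exp σ * (1 + η * exp (-σ)) = exp σ + η := by
    rw [show exp σ * (1 + η * exp (-σ)) = exp σ + η * (exp σ * exp (-σ)) from by ring,
      hEE, mul_one]
  have hmulσn : exp σ * (1 - η * exp (-σ)) = exp σ - η := by
    rw [show exp σ * (1 - η * exp (-σ)) = exp σ - η * (exp σ * exp (-σ)) from by ring,
      hEE, mul_one]
  have hcPLu1 : exp σ + η < 1 := by
    have h1 := mul_lt_mul_of_pos_left hησ3 hEσpos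
    rw [hmulσp] at h1
    have h2 : exp σ * exp (-σ/2) = exp (σ/2) := by rw [← Real.exp_add]; ring_nf
    have h3 : exp (σ/2) < 1 := by
      rw [← Real.exp_zero]; exact exp_lt_exp.mpr (by linarith only [hσ])
    rw [h2] at h1
    linarith only [h1, h3]
  have hexpσm : exp (σ - m) = exp σ * exp (-m) := by rw [← Real.exp_add]; ring_nf
  have hexpσm' : exp (σ + m) = exp σ * exp m := by rw [← Real.exp_add]
  have hcPLl_le : exp (σ - m) ≤ exp σ - η := by
    rw [hexpσm, ← hmulσn]
    exact mul_le_mul_of_nonneg_left e2 hEσpos.le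
  have hcPLu_em : exp σ + η ≤ exp (σ + m) := by
    rw [hexpσm', ← hmulσp]
    exact mul_le_mul_of_nonneg_left e1 hEσpos.le
  have hexpum : exp (u - m) = exp u * exp (-m) := by rw [← Real.exp_add]; ring_nf
  have hexpum' : exp (u + m) = exp u * exp m := by rw [← Real.exp_add]
  have hcBl_le : exp (u - m) ≤ exp u - η := by
    rw [hexpum]
    nlinarith only [mul_le_mul_of_nonneg_left e2 (exp_pos u).le, hEuσ, hη, exp_pos u]
  have hcBu_ge : exp u + η ≤ exp (u + m) := by
    rw [hexpum']
    nlinarith only [mul_le_mul_of_nonneg_left e1 (exp_pos u).le, hEuσ, hη, exp_pos u]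
  have hcrude : exp u + η ≤ 2 * exp u := by
    nlinarith only [hη, hEinv1, hz, hEu1]
  -- the induction along integer times
  have main : ∀ k : ℕ, (k : ℝ) ≤ (n : ℝ) →
      (exp (σ - m))^k ≤ ‖PL (G (k:ℝ) x)‖ ∧ ‖PL (G (k:ℝ) x)‖ ≤ (exp σ + η)^k ∧
      (exp (u - m))^k * x 2 ≤ G (k:ℝ) x 2 ∧ G (k:ℝ) x 2 ≤ (exp (u + m))^k * x 2 ∧
      G (k:ℝ) x 2 ≤ (2 * exp u)^k * x 2 := by
    intro k
    induction k with
    | zero => intro _; simp [hG.2.1 x, hxcyl]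
    | succ k ih =>
      intro hk1
      have hkn : (k : ℝ) ≤ (n : ℝ) := by push_cast at hk1 ⊢; linarith only [hk1]
      obtain ⟨ih1, ih2, ih3, ih4, ih5⟩ := ih hkn
      have hkt : (k : ℝ) < t := lt_of_le_of_lt hkn hn1
      have htrav := htravel (k:ℝ) ⟨Nat.cast_nonneg k, hkt⟩
      have hyB1 : G (k:ℝ) x ∈ B1 := by
        refine ⟨ih2.trans (pow_le_one₀ (by positivity) hcPLu1.le), ?_⟩
        rw [norm_PU, abs_of_pos htrav.1]
        exact htrav.2.le
      have hstep := step_lemma u σ μ η rB hη hB1B G hG hD2 hGB hLinv hUinv 1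
        ⟨zero_le_one, le_refl 1⟩ (G (k:ℝ) x) hyB1
      rw [mul_one, mul_one] at hstep
      obtain ⟨hA, hB⟩ := hstep
      rw [abs_of_pos htrav.1] at hA
      have hA' := abs_le.mp hA
      have hB' := abs_le.mp hB
      have hGsucc : G ((k+1 : ℕ) : ℝ) x = G 1 (G (k:ℝ) x) := by
        have h1 : ((k+1 : ℕ) : ℝ) = 1 + (k:ℝ) := by push_cast; ring
        rw [h1, hG.2.2]
      rw [hGsucc]
      have hPLnn : (0:ℝ) ≤ ‖PL (G (k:ℝ) x)‖ := norm_nonneg _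
      have hy2pos : 0 < G (k:ℝ) x 2 := htrav.1
      refine ⟨?_, ?_, ?_, ?_, ?_⟩
      · calc (exp (σ - m))^(k+1) = exp (σ - m) * (exp (σ - m))^k := by ring
        _ ≤ (exp σ - η) * (exp (σ - m))^k :=
            mul_le_mul_of_nonneg_right hcPLl_le (by positivity)
        _ ≤ (exp σ - η) * ‖PL (G (k:ℝ) x)‖ := mul_le_mul_of_nonneg_left ih1 hσηpos.le
        _ ≤ ‖PL (G 1 (G (k:ℝ) x))‖ := by linarith only [hB'.1]
      · calc ‖PL (G 1 (G (k:ℝ) x))‖ ≤ (exp σ + η) * ‖PL (G (k:ℝ) x)‖ := by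
              linarith only [hB'.2]
        _ ≤ (exp σ + η) * (exp σ + η)^k := mul_le_mul_of_nonneg_left ih2 (by positivity)
        _ = (exp σ + η)^(k+1) := by ring
      · calc (exp (u - m))^(k+1) * x 2 = exp (u - m) * ((exp (u - m))^k * x 2) := by ring
        _ ≤ exp (u - m) * G (k:ℝ) x 2 := mul_le_mul_of_nonneg_left ih3 (exp_pos _).le
        _ ≤ (exp u - η) * G (k:ℝ) x 2 := mul_le_mul_of_nonneg_right hcBl_le hy2pos.le
        _ ≤ G 1 (G (k:ℝ) x) 2 := by linarith only [hA'.1]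
      · calc G 1 (G (k:ℝ) x) 2 ≤ (exp u + η) * G (k:ℝ) x 2 := by linarith only [hA'.2]
        _ ≤ exp (u + m) * G (k:ℝ) x 2 := mul_le_mul_of_nonneg_right hcBu_ge hy2pos.le
        _ ≤ exp (u + m) * ((exp (u + m))^k * x 2) :=
            mul_le_mul_of_nonneg_left ih4 (exp_pos _).le
        _ = (exp (u + m))^(k+1) * x 2 := by ring
      · calc G 1 (G (k:ℝ) x) 2 ≤ (exp u + η) * G (k:ℝ) x 2 := by linarith only [hA'.2]
        _ ≤ (2 * exp u) * G (k:ℝ) x 2 := mul_le_mul_of_nonneg_right hcrude hy2pos.le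
        _ ≤ (2 * exp u) * ((2 * exp u)^k * x 2) :=
            mul_le_mul_of_nonneg_left ih5 (by positivity)
        _ = (2 * exp u)^(k+1) * x 2 := by ring
  obtain ⟨mn1, mn2, mn3, mn4, mn5⟩ := main n le_rfl
  -- the last fractional step
  set s := t - (n:ℝ) with hsdef
  have hs0 : 0 < s := by rw [hsdef]; linarith only [hn1]
  have hs1 : s ≤ 1 := by rw [hsdef]; linarith only [hn2]
  have htrav_n := htravel (n:ℝ) ⟨Nat.cast_nonneg n, hn1⟩
  have hyB1 : G (n:ℝ) x ∈ B1 := by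
    refine ⟨mn2.trans (pow_le_one₀ (by positivity) hcPLu1.le), ?_⟩
    rw [norm_PU, abs_of_pos htrav_n.1]
    exact htrav_n.2.le
  have hstep := step_lemma u σ μ η rB hη hB1B G hG hD2 hGB hLinv hUinv s
    ⟨hs0.le, hs1⟩ (G (n:ℝ) x) hyB1
  obtain ⟨fA, fB⟩ := hstep
  have hGt : G t x = G s (G (n:ℝ) x) := by
    rw [show t = s + (n:ℝ) by rw [hsdef]; ring, hG.2.2]
  rw [abs_of_pos htrav_n.1] at fA
  have fA' := abs_le.mp fA
  have fB' := abs_le.mp fB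
  have hPLn_nn : (0:ℝ) ≤ ‖PL (G (n:ℝ) x)‖ := norm_nonneg _
  have hy2n : 0 < G (n:ℝ) x 2 := htrav_n.1
  -- exp bounds for the fractional step
  have hEusage : (1:ℝ) ≤ exp (u * s) := by
    rw [← Real.exp_zero]
    exact exp_le_exp.mpr (by nlinarith only [hu, hs0])
  have hsubσ : (1:ℝ) ≤ exp (σ * s) * exp (-σ) := by
    rw [← Real.exp_add, ← Real.exp_zero]
    exact exp_le_exp.mpr (by nlinarith only [hσ, hs1])
  have hsubu : (1:ℝ) ≤ exp (u * s) * exp (-σ) := by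
    nlinarith only [hEusage, hEinv1]
  have hfBu : exp (σ * s) + η ≤ exp (σ * s + m) := by
    have h1 : exp (σ * s + m) = exp (σ * s) * exp m := by rw [← Real.exp_add]
    rw [h1]
    nlinarith only [mul_le_mul_of_nonneg_left e1 (exp_pos (σ*s)).le, hsubσ, hη]
  have hfBl : exp (σ * s - m) ≤ exp (σ * s) - η := by
    have h1 : exp (σ * s - m) = exp (σ * s) * exp (-m) := by rw [← Real.exp_add]; ring_nf
    rw [h1]
    nlinarith only [mul_le_mul_of_nonneg_left e2 (exp_pos (σ*s)).le, hsubσ, hη]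
  have hfAu : exp (u * s) + η ≤ exp (u * s + m) := by
    have h1 : exp (u * s + m) = exp (u * s) * exp m := by rw [← Real.exp_add]
    rw [h1]
    nlinarith only [mul_le_mul_of_nonneg_left e1 (exp_pos (u*s)).le, hsubu, hη]
  have hfAl : exp (u * s - m) ≤ exp (u * s) - η := by
    have h1 : exp (u * s - m) = exp (u * s) * exp (-m) := by rw [← Real.exp_add]; ring_nf
    rw [h1]
    nlinarith only [mul_le_mul_of_nonneg_left e2 (exp_pos (u*s)).le, hsubu, hη]
  have hfAcrude : exp (u * s) + η ≤ 2 * exp u := by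
    have h1 : exp (u * s) ≤ exp u := exp_le_exp.mpr (by nlinarith only [hu, hs1, hs0])
    linarith only [h1, hcrude]
  have hposσsη : 0 < exp (σ * s) - η := lt_of_lt_of_le (exp_pos _) hfBl
  have hposusη : 0 < exp (u * s) - η := lt_of_lt_of_le (exp_pos _) hfAl
  have hApowl : (exp (σ - m))^n = exp ((σ - m) * n) := by rw [mul_comm, Real.exp_nat_mul]
  have hApowu : (exp (σ + m))^n = exp ((σ + m) * n) := by rw [mul_comm, Real.exp_nat_mul]
  have hBpowl : (exp (u - m))^n = exp ((u - m) * n) := by rw [mul_comm, Real.exp_nat_mul]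
  have hBpowu : (exp (u + m))^n = exp ((u + m) * n) := by rw [mul_comm, Real.exp_nat_mul]
  have hpowPLu : (exp σ + η)^n ≤ exp ((σ + m) * n) := by
    rw [← hApowu]; exact pow_le_pow_left₀ (by positivity) hcPLu_em n
  have rawAu : ‖PL (G t x)‖ ≤ exp (σ * t + ((n:ℝ)+1) * m) := by
    rw [hGt]
    calc ‖PL (G s (G (n:ℝ) x))‖ ≤ (exp (σ * s) + η) * ‖PL (G (n:ℝ) x)‖ := by
          linarith only [fB'.2]
    _ ≤ exp (σ * s + m) * ‖PL (G (n:ℝ) x)‖ := mul_le_mul_of_nonneg_right hfBu hPLn_nn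
    _ ≤ exp (σ * s + m) * (exp σ + η)^n := mul_le_mul_of_nonneg_left mn2 (exp_pos _).le
    _ ≤ exp (σ * s + m) * exp ((σ + m) * n) := mul_le_mul_of_nonneg_left hpowPLu (exp_pos _).le
    _ = exp (σ * t + ((n:ℝ)+1) * m) := by
        rw [← Real.exp_add]; congr 1; rw [hsdef]; ring
  have rawAl : exp (σ * t - ((n:ℝ)+1) * m) ≤ ‖PL (G t x)‖ := by
    rw [hGt]
    calc exp (σ * t - ((n:ℝ)+1) * m) = exp (σ * s - m) * exp ((σ - m) * n) := by
          rw [← Real.exp_add]; congr 1; rw [hsdef]; ring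
    _ ≤ (exp (σ * s) - η) * exp ((σ - m) * n) :=
        mul_le_mul_of_nonneg_right hfBl (exp_pos _).le
    _ ≤ (exp (σ * s) - η) * ‖PL (G (n:ℝ) x)‖ := by
        rw [← hApowl]; exact mul_le_mul_of_nonneg_left mn1 hposσsη.le
    _ ≤ ‖PL (G s (G (n:ℝ) x))‖ := by linarith only [fB'.1]
  have hit' : G s (G (n:ℝ) x) 2 = 1 := by rw [← hGt]; exact hhit
  have rawBl : exp (u * t - ((n:ℝ)+1) * m) * x 2 ≤ 1 := by
    refine le_of_le_of_eq ?_ hit'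
    have hsplit : exp (u * t - ((n:ℝ)+1) * m) = exp (u * s - m) * exp ((u - m) * n) := by
      rw [← Real.exp_add]; congr 1; rw [hsdef]; ring
    calc exp (u * t - ((n:ℝ)+1) * m) * x 2
        = exp (u * s - m) * (exp ((u - m) * n) * x 2) := by rw [hsplit]; ring
    _ ≤ (exp (u * s) - η) * (exp ((u - m) * n) * x 2) :=
        mul_le_mul_of_nonneg_right hfAl (by positivity)
    _ ≤ (exp (u * s) - η) * G (n:ℝ) x 2 := by
        rw [← hBpowl]; exact mul_le_mul_of_nonneg_left mn3 hposusη.le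
    _ ≤ G s (G (n:ℝ) x) 2 := by linarith only [fA'.1]
  have rawBu : 1 ≤ exp (u * t + ((n:ℝ)+1) * m) * x 2 := by
    refine le_of_eq_of_le hit'.symm ?_
    calc G s (G (n:ℝ) x) 2 ≤ (exp (u * s) + η) * G (n:ℝ) x 2 := by linarith only [fA'.2]
    _ ≤ exp (u * s + m) * G (n:ℝ) x 2 := mul_le_mul_of_nonneg_right hfAu hy2n.le
    _ ≤ exp (u * s + m) * ((exp (u + m))^n * x 2) :=
        mul_le_mul_of_nonneg_left mn4 (exp_pos _).le
    _ = exp (u * t + ((n:ℝ)+1) * m) * x 2 := by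
        rw [hBpowu, ← mul_assoc, ← Real.exp_add]
        congr 2
        rw [hsdef]; ring
  have rawC : 1 ≤ (2 * exp u)^(n+1) * x 2 := by
    refine le_of_eq_of_le hit'.symm ?_
    calc G s (G (n:ℝ) x) 2 ≤ (exp (u * s) + η) * G (n:ℝ) x 2 := by linarith only [fA'.2]
    _ ≤ (2 * exp u) * G (n:ℝ) x 2 := mul_le_mul_of_nonneg_right hfAcrude hy2n.le
    _ ≤ (2 * exp u) * ((2 * exp u)^n * x 2) :=
        mul_le_mul_of_nonneg_left mn5 (by positivity)
    _ = (2 * exp u)^(n+1) * x 2 := by ring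
  -- lower bound on n, giving the key inequality
  have hlog2 : 0 < Real.log 2 := Real.log_pos one_lt_two
  have hul2 : 0 < u + Real.log 2 := by linarith only [hu, hlog2]
  have hpowC : ((2:ℝ) * exp u)^(n+1) = exp (((n:ℝ)+1) * (u + Real.log 2)) := by
    have h2eu : (2:ℝ) * exp u = exp (u + Real.log 2) := by
      rw [Real.exp_add, Real.exp_log two_pos]; ring
    rw [h2eu, ← Real.exp_nat_mul]
    congr 1; push_cast; ring
  have h1δ : 1/δ < exp (((n:ℝ)+1) * (u + Real.log 2)) := by
    rw [hpowC] at rawC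
    rw [div_lt_iff₀ hδ.1]
    nlinarith only [rawC, hx3lt, exp_pos (((n:ℝ)+1) * (u + Real.log 2))]
  have hlogδ : Real.log (1/δ) < ((n:ℝ)+1) * (u + Real.log 2) := by
    calc Real.log (1/δ) < Real.log (exp (((n:ℝ)+1) * (u + Real.log 2))) :=
          Real.log_lt_log (one_div_pos.mpr hδ.1) h1δ
    _ = ((n:ℝ)+1) * (u + Real.log 2) := Real.log_exp _
  have hfrac : 1 / (u + Real.log 2) * Real.log (1/δ) < (n:ℝ) + 1 := by
    rw [show 1 / (u + Real.log 2) * Real.log (1/δ)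
        = Real.log (1/δ) / (u + Real.log 2) by ring, div_lt_iff₀ hul2]
    linarith only [hlogδ]
  have hηm : 0 < ηt - m := by linarith only [hmηt]
  have hn_gt : m / (ηt - m) < (n:ℝ) := by
    linarith only [hδsmall, hfrac]
  have hnm : m < (n:ℝ) * (ηt - m) := by
    rw [div_lt_iff₀ hηm] at hn_gt
    linarith only [hn_gt]
  have K : ((n:ℝ)+1) * m ≤ t * ηt := by
    nlinarith only [hnm, mul_pos (sub_pos.mpr hn1) hηt,
      mul_nonneg (sub_pos.mpr hn1).le hm0]
  have Ka : ((n:ℝ)+1) * arcsin (η / (exp σ - η)) ≤ t * ηt :=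
    le_trans (mul_le_mul_of_nonneg_left hl3 (by positivity)) K
  have hb2 : 1 ≤ exp ((u + ηt) * t) * x 2 :=
    rawBu.trans (mul_le_mul_of_nonneg_right (exp_le_exp.mpr (by linarith only [K]))
      hx3pos.le)
  have hb1 : exp ((u - ηt) * t) * x 2 ≤ 1 :=
    le_trans (mul_le_mul_of_nonneg_right (exp_le_exp.mpr (by linarith only [K]))
      hx3pos.le) rawBl
  refine ⟨⟨?_, ?_⟩, ⟨hb1, hb2⟩, ⟨?_, ?_⟩, ?_⟩
  · exact le_trans (exp_le_exp.mpr (by linarith only [K])) rawAl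
  · exact rawAu.trans (exp_le_exp.mpr (by linarith only [K]))
  · have hlog : Real.log 1 ≤ Real.log (exp ((u + ηt) * t) * x 2) :=
      Real.log_le_log one_pos hb2
    rw [Real.log_one, Real.log_mul (exp_pos _).ne' hx3pos.ne', Real.log_exp] at hlog
    rw [show Real.log (1 / x 2) = - Real.log (x 2) by rw [one_div, Real.log_inv],
      show 1 / (u + ηt) * -Real.log (x 2) = -Real.log (x 2) / (u + ηt) by ring,
      div_le_iff₀ (by linarith only [hu, hηt])]
    linarith only [hlog]
  · have hlog : Real.log (exp ((u - ηt) * t) * x 2) ≤ Real.log 1 :=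
      Real.log_le_log (by positivity) hb1
    rw [Real.log_one, Real.log_mul (exp_pos _).ne' hx3pos.ne', Real.log_exp] at hlog
    rw [show Real.log (1 / x 2) = - Real.log (x 2) by rw [one_div, Real.log_inv],
      show 1 / (u - ηt) * -Real.log (x 2) = -Real.log (x 2) / (u - ηt) by ring,
      le_div_iff₀ (by linarith only [hηtu])]
    linarith only [hlog]
  · intro ψ φ h1 h2
    constructor
    · linarith only [Ka, h1]
    · linarith only [Ka, h2]
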